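/- Let Y : [0,1] → ℝ^d be continuous, let R > 0 and ρ > 1. For n ≥ 0 let D_n = {k 2^{−n} : k = 0, 1, …, 2^n}, and for n ≥ 1 and t ∈ D_n let t_- denote the largest element of D_{n−1} with t_- ≤ t. If ‖Y(0)‖ < R(ρ−1)/ρ and ‖Y(t) − Y(t_-)‖ < R(ρ−1)/ρ^{n+1} for every n ≥ 1 and every t ∈ D_n, then sup_{s∈[0,1]} ‖Y(s)‖ ≤ R. -/

import Mathlib

open Filter Set

open Topology

/-- Dyadic chaining bound: if a continuous path `Y` on `[0,1]` satisfies
`‖Y(0)‖ < R(ρ−1)/ρ` and, for every `n ≥ 1` and every dyadic point `t = k/2ⁿ` of level `n`,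
`‖Y(t) − Y(t₋)‖ < R(ρ−1)/ρ^{n+1}` where `t₋ = ⌊k/2⌋/2^{n−1}` is the largest level-`(n−1)`
dyadic point `≤ t`, then `sup_{s∈[0,1]} ‖Y(s)‖ ≤ R`. -/
theorem stmt10 {d : ℕ} (Y : ℝ → EuclideanSpace ℝ (Fin d)) (hY : ContinuousOn Y (Icc 0 1))
    (R ρ : ℝ) (hR : 0 < R) (hρ : 1 < ρ)
    (h0 : ‖Y 0‖ < R * (ρ - 1) / ρ)
    (hinc : ∀ n : ℕ, 1 ≤ n → ∀ k : ℕ, k ≤ 2 ^ n →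
      ‖Y ((k : ℝ) / 2 ^ n) - Y ((↑(k / 2) : ℝ) / 2 ^ (n - 1))‖ < R * (ρ - 1) / ρ ^ (n + 1)) :
    ∀ s ∈ Icc (0:ℝ) 1, ‖Y s‖ ≤ R := by
  have hρ0 : (0:ℝ) < ρ := by linarith
  have key : ∀ n : ℕ, ∀ k : ℕ, k < 2 ^ n →
      ‖Y ((k:ℝ)/2^n)‖ ≤ R * (1 - ρ⁻¹ ^ (n+1)) := by
    intro n
    induction n with
    | zero =>
      intro k hk
      interval_cases k
      have heq : R * (ρ - 1) / ρ = R * (1 - ρ⁻¹ ^ (0+1)) := by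
        simp only [zero_add, pow_one]
        field_simp
      rw [heq] at h0
      simpa using h0.le
    | succ n ih =>
      intro k hk
      have hk2 : k / 2 < 2 ^ n := by
        have h2 : 2 ^ (n+1) = 2 * 2 ^ n := by ring
        omega
      have h1 := hinc (n+1) (by omega) k (le_of_lt hk)
      simp only [Nat.add_sub_cancel] at h1
      have h2 := ih (k/2) hk2
      have h3 := norm_add_le (Y ((k:ℝ)/2^(n+1)) - Y ((↑(k/2):ℝ)/2^n)) (Y ((↑(k/2):ℝ)/2^n))
      rw [sub_add_cancel] at h3
      have heq : R * (ρ - 1) / ρ ^ (n + 1 + 1) + R * (1 - ρ⁻¹ ^ (n+1))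
          = R * (1 - ρ⁻¹ ^ (n+1+1)) := by
        rw [inv_pow, inv_pow]
        field_simp
        ring
      linarith
  have key2 : ∀ n k : ℕ, k < 2 ^ n → ‖Y ((k:ℝ)/2^n)‖ ≤ R := by
    intro n k hk
    have h1 := key n k hk
    have h2 : (0:ℝ) < ρ⁻¹ ^ (n+1) := by positivity
    nlinarith
  intro s hs
  obtain ⟨hs0, hs1⟩ := hs
  set u : ℕ → ℝ := fun j => ((min ⌊s * 2^j⌋₊ (2^j - 1) : ℕ) : ℝ) / (2:ℝ)^j with hu
  have hpow : ∀ j : ℕ, (0:ℝ) < 2 ^ j := fun j => by positivity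
  have hKlt : ∀ j : ℕ, min ⌊s * 2^j⌋₊ (2^j - 1) < 2 ^ j := by
    intro j
    have h1 : (1:ℕ) ≤ 2 ^ j := Nat.one_le_two_pow
    have h2 := min_le_right ⌊s * 2^j⌋₊ (2^j - 1)
    omega
  have hK1 : ∀ j : ℕ, ((min ⌊s * 2^j⌋₊ (2^j - 1) : ℕ) : ℝ) ≤ s * 2^j := by
    intro j
    calc ((min ⌊s * 2^j⌋₊ (2^j - 1) : ℕ) : ℝ) ≤ (⌊s * 2^j⌋₊ : ℝ) := by
          exact_mod_cast min_le_left _ _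
      _ ≤ s * 2^j := Nat.floor_le (by positivity)
  have hK2 : ∀ j : ℕ, s * 2^j ≤ ((min ⌊s * 2^j⌋₊ (2^j - 1) : ℕ) : ℝ) + 1 := by
    intro j
    rcases le_or_gt ⌊s * 2^j⌋₊ (2^j - 1) with h | h
    · rw [min_eq_left h]
      exact (Nat.lt_floor_add_one _).le
    · rw [min_eq_right h.le]
      have h1 : (1:ℕ) ≤ 2 ^ j := Nat.one_le_two_pow
      have hc : ((2^j - 1 : ℕ) : ℝ) + 1 = (2:ℝ)^j := by
        push_cast [h1]
        ring
      rw [hc]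
      nlinarith [hpow j]
  have hhigh : ∀ j, u j ≤ s := by
    intro j
    rw [hu]
    simp only
    rw [div_le_iff₀ (hpow j)]
    exact hK1 j
  have hlow : ∀ j, s - (2:ℝ)⁻¹ ^ j ≤ u j := by
    intro j
    rw [hu]
    simp only
    rw [le_div_iff₀ (hpow j)]
    have hone : (2:ℝ)⁻¹ ^ j * 2 ^ j = 1 := by
      rw [← mul_pow]
      norm_num
    nlinarith [hK2 j]
  have hmem : ∀ j, u j ∈ Icc (0:ℝ) 1 := by
    intro j
    refine ⟨by rw [hu]; positivity, le_trans (hhigh j) hs1⟩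
  have hnorm : ∀ j, ‖Y (u j)‖ ≤ R := fun j => key2 j _ (hKlt j)
  have htend : Tendsto u atTop (𝓝 s) := by
    refine tendsto_of_tendsto_of_tendsto_of_le_of_le ?_ tendsto_const_nhds hlow hhigh
    have : Tendsto (fun j : ℕ => (2:ℝ)⁻¹ ^ j) atTop (𝓝 0) :=
      tendsto_pow_atTop_nhds_zero_of_lt_one (by norm_num) (by norm_num)
    simpa using tendsto_const_nhds.sub this
  have htend' : Tendsto u atTop (𝓝[Icc (0:ℝ) 1] s) :=
    tendsto_nhdsWithin_iff.mpr ⟨htend, Eventually.of_forall hmem⟩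
  have hYt : Tendsto (fun j => Y (u j)) atTop (𝓝 (Y s)) :=
    (hY s ⟨hs0, hs1⟩).tendsto.comp htend'
  exact le_of_tendsto hYt.norm (Eventually.of_forall hnorm)
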